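/- Let k, r', ρ ∈ ℕ, let M be a finite multiset of vectors in {0,1,□}^d with cover (R_M, T_M), and let M' ⊆ M be such that the compatibility graph G on M' with threshold ρ has at most k connected components; let γ_max(M') be the maximum of γ(C) over the connected components C of G. Then there exists a set D' ⊆ [d] of coordinates with |D'| ≤ k·γ_max(M')·(|M'|−1) + |R_M|·(|M'|−1)·(r'+1) + |T_M| such that for any two vectors m, m' ∈ M' that either lie in the same connected component of G or such that at least one of m, m' belongs to R_M, it holds that δ(m[D'], m'[D']) = δ(m, m') if δ(m, m') ≤ r', and δ(m[D'], m'[D']) > r' otherwise, where m[D'] denotes the restriction of m to the coordinates in D'. -/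
import Mathlib


open scoped Classical

/-- δ(a,b) for incomplete vectors: the number of coordinates on which
both entries are known and differ. -/
noncomputable def pdist {ι : Type} [Fintype ι] (a b : ι → Option Bool) : ℕ :=
  (Finset.univ.filter fun i => ∃ x y : Bool, a i = some x ∧ b i = some y ∧ x ≠ y).card

/-- δ(a[D], b[D]): the number of coordinates in `D` on which both entries are
known and differ (δ of the restrictions to `D`). -/
noncomputable def pdistOn {ι : Type} [Fintype ι] (D : Finset ι) (a b : ι → Option Bool) : ℕ :=
  (D.filter fun i => ∃ x y : Bool, a i = some x ∧ b i = some y ∧ x ≠ y).card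

/-- The compatibility graph on a finite set of incomplete vectors with threshold ρ. -/
def compatGraph {ι : Type} [Fintype ι] (S : Finset (ι → Option Bool)) (ρ : ℕ) :
    SimpleGraph {x // x ∈ S} :=
  SimpleGraph.fromRel fun a b => pdist a.1 b.1 ≤ ρ

/-- γ_max: the maximum diameter of a connected component of the compatibility
graph on `S` with threshold ρ. -/
noncomputable def gammaMax {ι : Type} [Fintype ι]
    (S : Finset (ι → Option Bool)) (ρ : ℕ) : ℕ :=
  sSup {n | ∃ a b : {x // x ∈ S}, (compatGraph S ρ).Reachable a b ∧ pdist a.1 b.1 = n}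

noncomputable def diffSet {ι : Type} [Fintype ι] (a b : ι → Option Bool) : Finset ι :=
  Finset.univ.filter fun i => ∃ x y : Bool, a i = some x ∧ b i = some y ∧ x ≠ y

lemma pdist_eq_card {ι : Type} [Fintype ι] (a b : ι → Option Bool) :
    pdist a b = (diffSet a b).card := rfl

lemma diffSet_comm {ι : Type} [Fintype ι] (a b : ι → Option Bool) :
    diffSet a b = diffSet b a := by
  ext i
  simp only [diffSet, Finset.mem_filter, Finset.mem_univ, true_and]
  constructor <;> rintro ⟨x, y, h1, h2, h3⟩ <;> exact ⟨y, x, h2, h1, Ne.symm h3⟩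

lemma pdist_comm {ι : Type} [Fintype ι] (a b : ι → Option Bool) :
    pdist a b = pdist b a := by rw [pdist_eq_card, pdist_eq_card, diffSet_comm]

lemma diffSet_self {ι : Type} [Fintype ι] (a : ι → Option Bool) :
    diffSet a a = ∅ := by
  ext i
  simp only [diffSet, Finset.mem_filter, Finset.mem_univ, true_and, Finset.notMem_empty,
    iff_false]
  rintro ⟨x, y, h1, h2, h3⟩
  rw [h1] at h2
  exact h3 (Option.some_injective _ h2)

lemma pdistOn_le_pdist {ι : Type} [Fintype ι] (D : Finset ι) (a b : ι → Option Bool) :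
    pdistOn D a b ≤ pdist a b := by
  apply Finset.card_le_card
  exact Finset.filter_subset_filter _ (Finset.subset_univ D)

lemma pdistOn_eq_of_subset {ι : Type} [Fintype ι] {D : Finset ι} {a b : ι → Option Bool}
    (h : diffSet a b ⊆ D) : pdistOn D a b = pdist a b := by
  refine le_antisymm (pdistOn_le_pdist D a b) ?_
  rw [pdist_eq_card]
  apply Finset.card_le_card
  intro i hi
  have hi' := hi
  rw [diffSet, Finset.mem_filter] at hi'
  exact Finset.mem_filter.2 ⟨h hi, hi'.2⟩

lemma le_pdistOn {ι : Type} [Fintype ι] {D B : Finset ι} {a b : ι → Option Bool}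
    (hBD : B ⊆ D) (hBd : B ⊆ diffSet a b) : B.card ≤ pdistOn D a b := by
  apply Finset.card_le_card
  intro i hi
  have := hBd hi
  rw [diffSet, Finset.mem_filter] at this
  exact Finset.mem_filter.2 ⟨hBD hi, this.2⟩

lemma pdist_le_gammaMax {ι : Type} [Fintype ι] (S : Finset (ι → Option Bool)) (ρ : ℕ)
    {a b : {x // x ∈ S}} (h : (compatGraph S ρ).Reachable a b) :
    pdist a.1 b.1 ≤ gammaMax S ρ := by
  rw [gammaMax]
  refine le_csSup ⟨Fintype.card ι, ?_⟩ ⟨a, b, h, rfl⟩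
  rintro n ⟨a, b, -, rfl⟩
  rw [pdist]
  exact (Finset.card_filter_le _ _).trans_eq (Finset.card_univ)

noncomputable def subsetOfCard {ι : Type} (s : Finset ι) (n : ℕ) : Finset ι :=
  if h : n ≤ s.card then (Finset.exists_subset_card_eq h).choose else s

lemma subsetOfCard_subset {ι : Type} (s : Finset ι) (n : ℕ) : subsetOfCard s n ⊆ s := by
  rw [subsetOfCard]
  split_ifs with h
  · exact (Finset.exists_subset_card_eq h).choose_spec.1
  · exact subset_rfl

lemma subsetOfCard_card {ι : Type} {s : Finset ι} {n : ℕ} (h : n ≤ s.card) :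
    (subsetOfCard s n).card = n := by
  rw [subsetOfCard, dif_pos h]
  exact (Finset.exists_subset_card_eq h).choose_spec.2

/-- selection of min(pdist, r'+1) differing coordinates -/
noncomputable def bsel {ι : Type} [Fintype ι] (r' : ℕ) (a b : ι → Option Bool) : Finset ι :=
  if pdist a b ≤ r' then diffSet a b else subsetOfCard (diffSet a b) (r' + 1)

lemma bsel_subset {ι : Type} [Fintype ι] (r' : ℕ) (a b : ι → Option Bool) :
    bsel r' a b ⊆ diffSet a b := by
  rw [bsel]
  split_ifs
  · exact subset_rfl
  · exact subsetOfCard_subset _ _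

lemma bsel_card_le {ι : Type} [Fintype ι] (r' : ℕ) (a b : ι → Option Bool) :
    (bsel r' a b).card ≤ r' + 1 := by
  rw [bsel]
  split_ifs with h
  · rw [← pdist_eq_card]; omega
  · rw [subsetOfCard_card (by rw [← pdist_eq_card]; omega)]

lemma bsel_eq_of_le {ι : Type} [Fintype ι] {r' : ℕ} {a b : ι → Option Bool}
    (h : pdist a b ≤ r') : bsel r' a b = diffSet a b := by
  rw [bsel, if_pos h]

lemma bsel_card_of_gt {ι : Type} [Fintype ι] {r' : ℕ} {a b : ι → Option Bool}
    (h : r' < pdist a b) : (bsel r' a b).card = r' + 1 := by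
  rw [bsel, if_neg (by omega)]
  exact subsetOfCard_card (by rw [← pdist_eq_card]; omega)

noncomputable def repc {ι : Type} [Fintype ι] (S : Finset (ι → Option Bool)) (ρ : ℕ)
    (R : Multiset (ι → Option Bool)) (v₀ : {x // x ∈ S})
    (c : (compatGraph S ρ).ConnectedComponent) : {x // x ∈ S} :=
  if h : ∃ w : {x // x ∈ S}, (compatGraph S ρ).connectedComponentMk w = c ∧ w.1 ∉ R then
    h.choose else v₀

lemma repc_spec {ι : Type} [Fintype ι] (S : Finset (ι → Option Bool)) (ρ : ℕ)
    (R : Multiset (ι → Option Bool)) (v₀ : {x // x ∈ S})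
    (c : (compatGraph S ρ).ConnectedComponent)
    (h : ∃ w : {x // x ∈ S}, (compatGraph S ρ).connectedComponentMk w = c ∧ w.1 ∉ R) :
    (compatGraph S ρ).connectedComponentMk (repc S ρ R v₀ c) = c ∧ (repc S ρ R v₀ c).1 ∉ R := by
  rw [repc, dif_pos h]
  exact h.choose_spec

theorem statement_7 {d : ℕ} (k r' ρ : ℕ)
    (M R : Multiset (Fin d → Option Bool)) (T : Finset (Fin d))
    (hRM : R ≤ M)
    (hcover : ∀ v ∈ M, ∀ i : Fin d, v i = none → v ∈ R ∨ i ∈ T)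
    (M' : Multiset (Fin d → Option Bool)) (hM'M : M' ≤ M)
    (hcomp : Nat.card (compatGraph M'.toFinset ρ).ConnectedComponent ≤ k) :
    ∃ D' : Finset (Fin d),
      D'.card ≤ k * gammaMax M'.toFinset ρ * (Multiset.card M' - 1)
          + Multiset.card R * (Multiset.card M' - 1) * (r' + 1) + T.card ∧
      ∀ m, ∀ hm : m ∈ M'.toFinset, ∀ m', ∀ hm' : m' ∈ M'.toFinset,
        ((compatGraph M'.toFinset ρ).Reachable ⟨m, hm⟩ ⟨m', hm'⟩ ∨ m ∈ R ∨ m' ∈ R) →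
          (pdist m m' ≤ r' → pdistOn D' m m' = pdist m m') ∧
          (r' < pdist m m' → r' < pdistOn D' m m') := by
  classical
  by_cases hSe : M'.toFinset = ∅
  · refine ⟨∅, Nat.zero_le _, ?_⟩
    intro m hm
    rw [hSe] at hm
    exact absurd hm (Finset.notMem_empty m)
  set S := M'.toFinset with hSdef
  obtain ⟨x₀, hx₀⟩ := Finset.nonempty_iff_ne_empty.2 hSe
  set v₀ : {x // x ∈ S} := ⟨x₀, hx₀⟩ with hv₀
  set G := compatGraph S ρ with hG
  set ccm : {x // x ∈ S} → G.ConnectedComponent := G.connectedComponentMk with hccm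
  set rp : {x // x ∈ S} → {x // x ∈ S} := fun v => repc S ρ R v₀ (ccm v) with hrpdef
  have hrp : ∀ v : {x // x ∈ S}, v.1 ∉ R → ccm (rp v) = ccm v ∧ (rp v).1 ∉ R := fun v hv =>
    repc_spec S ρ R v₀ (ccm v) ⟨v, rfl, hv⟩
  have hrpcongr : ∀ v w, ccm v = ccm w → rp v = rp w := by
    intro v w h
    simp only [hrpdef]
    rw [h]
  have hrpidem : ∀ v, v.1 ∉ R → rp (rp v) = rp v := fun v hv => hrpcongr _ _ ((hrp v hv).1)
  set F : Finset {x // x ∈ S} := S.attach.filter (fun v => v.1 ∉ R) with hF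
  set FR : Finset {x // x ∈ S} := S.attach.filter (fun v => v.1 ∈ R) with hFR
  set A : Finset (Fin d) := F.biUnion (fun v => diffSet (rp v).1 v.1 \ T) with hA
  set B : Finset (Fin d) := FR.biUnion (fun v => S.attach.biUnion fun w => bsel r' v.1 w.1)
    with hB
  have hScard : S.card ≤ Multiset.card M' := Multiset.toFinset_card_le M'
  have hk1 : 1 ≤ k := by
    haveI : Nonempty G.ConnectedComponent := ⟨ccm v₀⟩
    have : 0 < Nat.card G.ConnectedComponent := Nat.card_pos
    omega
  -- cardinality of A
  have hAcard : A.card ≤ k * gammaMax S ρ * (Multiset.card M' - 1) := by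
    have h1 : A.card ≤ ∑ v ∈ F, (diffSet (rp v).1 v.1 \ T).card := Finset.card_biUnion_le
    have h2 : ∑ v ∈ F, (diffSet (rp v).1 v.1 \ T).card
        ≤ gammaMax S ρ * (Multiset.card M' - 1) := by
      by_cases hFe : F = ∅
      · rw [hFe]
        simp
      obtain ⟨v₁, hv₁⟩ := Finset.nonempty_iff_ne_empty.2 hFe
      rw [← Finset.sum_filter_add_sum_filter_not F (fun v => rp v = v)]
      have h3 : ∑ v ∈ F.filter (fun v => rp v = v), (diffSet (rp v).1 v.1 \ T).card = 0 := by
        apply Finset.sum_eq_zero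
        intro v hv
        rw [(Finset.mem_filter.1 hv).2, diffSet_self]
        simp
      have h4 : ∑ v ∈ F.filter (fun v => ¬ rp v = v), (diffSet (rp v).1 v.1 \ T).card
          ≤ (F.filter (fun v => ¬ rp v = v)).card * gammaMax S ρ := by
        apply Finset.sum_le_card_nsmul
        intro v hv
        have hvF : v ∈ F := Finset.mem_of_mem_filter _ hv
        have hvR : v.1 ∉ R := (Finset.mem_filter.1 hvF).2
        have hreach : G.Reachable (rp v) v :=
          SimpleGraph.ConnectedComponent.eq.mp ((hrp v hvR).1)
        calc (diffSet (rp v).1 v.1 \ T).card ≤ (diffSet (rp v).1 v.1).card :=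
              Finset.card_le_card (Finset.sdiff_subset)
          _ = pdist (rp v).1 v.1 := (pdist_eq_card _ _).symm
          _ ≤ gammaMax S ρ := pdist_le_gammaMax S ρ hreach
      have h5 : (F.filter (fun v => ¬ rp v = v)).card ≤ Multiset.card M' - 1 := by
        have hfix : rp v₁ ∈ F.filter (fun v => rp v = v) := by
          refine Finset.mem_filter.2 ⟨Finset.mem_filter.2 ⟨Finset.mem_attach _ _, ?_⟩, ?_⟩
          · exact (hrp v₁ (Finset.mem_filter.1 hv₁).2).2
          · exact hrpidem v₁ (Finset.mem_filter.1 hv₁).2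
        have hpos : 1 ≤ (F.filter (fun v => rp v = v)).card :=
          Finset.card_pos.2 ⟨_, hfix⟩
        have hsum : (F.filter (fun v => rp v = v)).card
            + (F.filter (fun v => ¬ rp v = v)).card = F.card := by
          simpa using Finset.card_filter_add_card_filter_not
            (s := F) (p := fun v => rp v = v)
        have hFcard : F.card ≤ S.card := by
          calc F.card ≤ S.attach.card := Finset.card_le_card (Finset.filter_subset _ _)
            _ = S.card := Finset.card_attach
        have hM'pos : 1 ≤ Multiset.card M' := by
          by_contra h
          have : Multiset.card M' = 0 := by omega
          rw [Multiset.card_eq_zero] at this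
          rw [this] at hSdef
          simp [hSdef] at hx₀
        omega
      calc ∑ v ∈ F.filter (fun v => rp v = v), (diffSet (rp v).1 v.1 \ T).card
            + ∑ v ∈ F.filter (fun v => ¬ rp v = v), (diffSet (rp v).1 v.1 \ T).card
          ≤ 0 + (F.filter (fun v => ¬ rp v = v)).card * gammaMax S ρ := by
            rw [h3]; exact Nat.add_le_add le_rfl h4
        _ ≤ (Multiset.card M' - 1) * gammaMax S ρ := by
            rw [Nat.zero_add]; exact Nat.mul_le_mul_right _ h5
        _ = gammaMax S ρ * (Multiset.card M' - 1) := Nat.mul_comm _ _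
    calc A.card ≤ gammaMax S ρ * (Multiset.card M' - 1) := h1.trans h2
      _ ≤ k * (gammaMax S ρ * (Multiset.card M' - 1)) := Nat.le_mul_of_pos_left _ hk1
      _ = k * gammaMax S ρ * (Multiset.card M' - 1) := (Nat.mul_assoc _ _ _).symm
  -- cardinality of B
  have hBcard : B.card ≤ Multiset.card R * (Multiset.card M' - 1) * (r' + 1) := by
    have h1 : B.card ≤ ∑ v ∈ FR, (S.attach.biUnion fun w => bsel r' v.1 w.1).card :=
      Finset.card_biUnion_le
    have h2 : ∀ v ∈ FR, (S.attach.biUnion fun w => bsel r' v.1 w.1).card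
        ≤ (Multiset.card M' - 1) * (r' + 1) := by
      intro v hv
      refine (Finset.card_biUnion_le).trans ?_
      have hvv : (bsel r' v.1 v.1).card = 0 := by
        have h0 : pdist v.1 v.1 ≤ r' := by
          rw [pdist_eq_card, diffSet_self]
          simp
        rw [bsel_eq_of_le h0, diffSet_self]
        simp
      rw [← Finset.sum_erase_add _ _ (Finset.mem_attach _ v), hvv, Nat.add_zero]
      have h3 : ∑ w ∈ S.attach.erase v, (bsel r' v.1 w.1).card
          ≤ (S.attach.erase v).card * (r' + 1) :=
        Finset.sum_le_card_nsmul _ _ _ (fun w _ => bsel_card_le r' v.1 w.1)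
      have h4 : (S.attach.erase v).card = S.card - 1 := by
        rw [Finset.card_erase_of_mem (Finset.mem_attach _ v), Finset.card_attach]
      have hS1 : 1 ≤ S.card := Finset.card_pos.2 ⟨x₀, hx₀⟩
      have : (S.attach.erase v).card ≤ Multiset.card M' - 1 := by omega
      exact h3.trans (Nat.mul_le_mul_right _ this)
    have h5 : FR.card ≤ Multiset.card R := by
      have h6 : FR.card ≤ R.toFinset.card := by
        apply Finset.card_le_card_of_injOn (fun v => v.1)
        · intro v hv
          exact Multiset.mem_toFinset.2 (Finset.mem_filter.1 hv).2
        · intro a _ b _ h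
          exact Subtype.ext h
      exact h6.trans (Multiset.toFinset_card_le R)
    calc B.card ≤ ∑ v ∈ FR, (S.attach.biUnion fun w => bsel r' v.1 w.1).card := h1
      _ ≤ FR.card * ((Multiset.card M' - 1) * (r' + 1)) := Finset.sum_le_card_nsmul _ _ _ h2
      _ ≤ Multiset.card R * ((Multiset.card M' - 1) * (r' + 1)) := Nat.mul_le_mul_right _ h5
      _ = Multiset.card R * (Multiset.card M' - 1) * (r' + 1) := (Nat.mul_assoc _ _ _).symm
  refine ⟨A ∪ B ∪ T, ?_, ?_⟩
  · calc (A ∪ B ∪ T).card ≤ (A ∪ B).card + T.card := Finset.card_union_le _ _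
      _ ≤ A.card + B.card + T.card := Nat.add_le_add_right (Finset.card_union_le _ _) _
      _ ≤ k * gammaMax S ρ * (Multiset.card M' - 1)
          + Multiset.card R * (Multiset.card M' - 1) * (r' + 1) + T.card :=
        Nat.add_le_add_right (Nat.add_le_add hAcard hBcard) _
  · intro m hm m' hm' H
    by_cases hmR : m ∈ R
    · have hvm : (⟨m, hm⟩ : {x // x ∈ S}) ∈ FR :=
        Finset.mem_filter.2 ⟨Finset.mem_attach _ _, hmR⟩
      have hsub : bsel r' m m' ⊆ A ∪ B ∪ T := by
        intro i hi
        refine Finset.mem_union_left _ (Finset.mem_union_right _ ?_)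
        exact Finset.mem_biUnion.2 ⟨⟨m, hm⟩, hvm,
          Finset.mem_biUnion.2 ⟨⟨m', hm'⟩, Finset.mem_attach _ _, hi⟩⟩
      constructor
      · intro hle
        apply pdistOn_eq_of_subset
        rw [← bsel_eq_of_le hle]
        exact hsub
      · intro hgt
        have h1 : r' + 1 ≤ pdistOn (A ∪ B ∪ T) m m' := by
          rw [← bsel_card_of_gt hgt]
          exact le_pdistOn hsub (bsel_subset _ _ _)
        omega
    · by_cases hm'R : m' ∈ R
      · have hvm' : (⟨m', hm'⟩ : {x // x ∈ S}) ∈ FR :=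
          Finset.mem_filter.2 ⟨Finset.mem_attach _ _, hm'R⟩
        have hsub : bsel r' m' m ⊆ A ∪ B ∪ T := by
          intro i hi
          refine Finset.mem_union_left _ (Finset.mem_union_right _ ?_)
          exact Finset.mem_biUnion.2 ⟨⟨m', hm'⟩, hvm',
            Finset.mem_biUnion.2 ⟨⟨m, hm⟩, Finset.mem_attach _ _, hi⟩⟩
        have hpc : pdist m' m = pdist m m' := pdist_comm _ _
        constructor
        · intro hle
          apply pdistOn_eq_of_subset
          rw [← diffSet_comm, ← bsel_eq_of_le (hpc.trans_le hle)]
          exact hsub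
        · intro hgt
          have h1 : r' + 1 ≤ pdistOn (A ∪ B ∪ T) m m' := by
            rw [← bsel_card_of_gt (hpc.symm ▸ hgt : r' < pdist m' m)]
            refine le_pdistOn hsub ?_
            rw [diffSet_comm]
            exact bsel_subset _ _ _
          omega
      · have hreach : G.Reachable ⟨m, hm⟩ ⟨m', hm'⟩ := by
          rcases H with h | h | h
          · exact h
          · exact absurd h hmR
          · exact absurd h hm'R
        have hccmm : ccm ⟨m, hm⟩ = ccm ⟨m', hm'⟩ :=
          SimpleGraph.ConnectedComponent.sound hreach
        have hsub : diffSet m m' ⊆ A ∪ B ∪ T := by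
          intro i hi
          by_cases hiT : i ∈ T
          · exact Finset.mem_union_right _ hiT
          rw [diffSet, Finset.mem_filter] at hi
          obtain ⟨-, x, y, hx, hy, hxy⟩ := hi
          have hu := hrp ⟨m, hm⟩ hmR
          have huM : (rp ⟨m, hm⟩).1 ∈ M :=
            Multiset.mem_of_le hM'M (Multiset.mem_toFinset.1 (rp ⟨m, hm⟩).2)
          have hucomp : (rp ⟨m, hm⟩).1 i ≠ none := by
            intro hnone
            rcases hcover _ huM i hnone with h | h
            · exact hu.2 h
            · exact hiT h
          obtain ⟨z, hz⟩ := Option.ne_none_iff_exists'.1 hucomp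
          by_cases hzx : z = x
          · -- use pair (rp, m')
            have hrpeq : rp ⟨m', hm'⟩ = rp ⟨m, hm⟩ := hrpcongr _ _ hccmm.symm
            have hmem : i ∈ diffSet (rp ⟨m', hm'⟩).1 m' \ T := by
              refine Finset.mem_sdiff.2 ⟨?_, hiT⟩
              rw [hrpeq, diffSet, Finset.mem_filter]
              refine ⟨Finset.mem_univ _, z, y, hz, hy, ?_⟩
              rw [hzx]
              exact hxy
            have hvm' : (⟨m', hm'⟩ : {x // x ∈ S}) ∈ F :=
              Finset.mem_filter.2 ⟨Finset.mem_attach _ _, hm'R⟩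
            exact Finset.mem_union_left _ (Finset.mem_union_left _
              (Finset.mem_biUnion.2 ⟨⟨m', hm'⟩, hvm', hmem⟩))
          · have hmem : i ∈ diffSet (rp ⟨m, hm⟩).1 m \ T := by
              refine Finset.mem_sdiff.2 ⟨?_, hiT⟩
              rw [diffSet, Finset.mem_filter]
              exact ⟨Finset.mem_univ _, z, x, hz, hx, hzx⟩
            have hvm : (⟨m, hm⟩ : {x // x ∈ S}) ∈ F :=
              Finset.mem_filter.2 ⟨Finset.mem_attach _ _, hmR⟩
            exact Finset.mem_union_left _ (Finset.mem_union_left _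
              (Finset.mem_biUnion.2 ⟨⟨m, hm⟩, hvm, hmem⟩))
        have heq : pdistOn (A ∪ B ∪ T) m m' = pdist m m' := pdistOn_eq_of_subset hsub
        exact ⟨fun _ => heq, fun h => heq ▸ h⟩
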